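/- Let 0 < ρ < 1, g_n = n ρ^{n/2} if n = 2^j for some j ≥ 1 and g_n = 0 otherwise, and for each k ≥ 1 set δ_k = ρ^{n_k} with n_k = 2^k + 2^{k-1}. Then there exists a constant C such that for all k, Σ_{n≥1} δ_k |g_n|² / (n (δ_k² + ρ^{2n})) ≤ C. -/

import Mathlib

open Filter

private lemma nat_gap (j k : ℕ) (hj : 1 ≤ j) (hk : 1 ≤ k) :
    (2 ^ j ≤ 2 ^ k + 2 ^ (k - 1) ∧ 2 ^ j ≤ 4 * (2 ^ k + 2 ^ (k - 1) - 2 ^ j)) ∨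
    (2 ^ k + 2 ^ (k - 1) ≤ 2 ^ j ∧ 2 ^ j ≤ 4 * (2 ^ j - (2 ^ k + 2 ^ (k - 1)))) := by
  rcases le_or_gt j k with h | h
  · left
    have h1 : 2 ^ j ≤ 2 ^ k := Nat.pow_le_pow_right (by norm_num) h
    have h2 : 2 ^ k = 2 * 2 ^ (k - 1) := by
      rw [← pow_succ']
      congr 1
      omega
    have h3 : 2 ^ j ≤ 2 * 2 ^ (j - 1) := by
      rw [← pow_succ']
      exact Nat.pow_le_pow_right (by norm_num) (by omega)
    omega
  · right
    have h1 : 2 ^ (k - 1) ≤ 2 ^ (j - 2) := Nat.pow_le_pow_right (by norm_num) (by omega)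
    have h2 : 2 ^ k = 2 * 2 ^ (k - 1) := by
      rw [← pow_succ']
      congr 1
      omega
    have h3 : 2 ^ j = 4 * 2 ^ (j - 2) := by
      rw [show (4 : ℕ) = 2 ^ 2 from rfl, ← pow_add]
      congr 1
      omega
    omega

private lemma key_ineq (ρ : ℝ) (hρ : 0 < ρ) (hρ1 : ρ ≤ 1) (N m : ℕ)
    (h : (m ≤ N ∧ m ≤ 4 * (N - m)) ∨ (N ≤ m ∧ m ≤ 4 * (m - N))) :
    ρ ^ (N + m) ≤ ρ ^ ((m : ℝ) / 4) * (ρ ^ (2 * N) + ρ ^ (2 * m)) := by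
  have hpos : ∀ a : ℕ, (0:ℝ) < ρ ^ a := fun a => pow_pos hρ a
  rcases h with ⟨hmN, h4⟩ | ⟨hNm, h4⟩
  · have e : N + m = (N - m) + 2 * m := by omega
    rw [e, pow_add]
    have h1 : (ρ : ℝ) ^ (N - m) ≤ ρ ^ ((m : ℝ) / 4) := by
      rw [← Real.rpow_natCast ρ (N - m)]
      apply Real.rpow_le_rpow_of_exponent_ge hρ hρ1
      have : (m : ℝ) ≤ 4 * ((N - m : ℕ) : ℝ) := by exact_mod_cast h4
      linarith
    calc ρ ^ (N - m) * ρ ^ (2 * m) ≤ ρ ^ ((m : ℝ) / 4) * ρ ^ (2 * m) :=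
          mul_le_mul_of_nonneg_right h1 (hpos _).le
      _ ≤ ρ ^ ((m : ℝ) / 4) * (ρ ^ (2 * N) + ρ ^ (2 * m)) := by
          have := (hpos (2 * N)).le
          have hX : (0:ℝ) ≤ ρ ^ ((m : ℝ) / 4) := (Real.rpow_pos_of_pos hρ _).le
          nlinarith
  · have e : N + m = (m - N) + 2 * N := by omega
    rw [e, pow_add]
    have h1 : (ρ : ℝ) ^ (m - N) ≤ ρ ^ ((m : ℝ) / 4) := by
      rw [← Real.rpow_natCast ρ (m - N)]
      apply Real.rpow_le_rpow_of_exponent_ge hρ hρ1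
      have : (m : ℝ) ≤ 4 * ((m - N : ℕ) : ℝ) := by exact_mod_cast h4
      linarith
    calc ρ ^ (m - N) * ρ ^ (2 * N) ≤ ρ ^ ((m : ℝ) / 4) * ρ ^ (2 * N) :=
          mul_le_mul_of_nonneg_right h1 (hpos _).le
      _ ≤ ρ ^ ((m : ℝ) / 4) * (ρ ^ (2 * N) + ρ ^ (2 * m)) := by
          have := (hpos (2 * m)).le
          have hX : (0:ℝ) ≤ ρ ^ ((m : ℝ) / 4) := (Real.rpow_pos_of_pos hρ _).le
          nlinarith

set_option maxHeartbeats 1000000 in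
/-- With g_n as in stmt0 and δ_k = ρ^{2^k + 2^{k-1}}, the dissipation sums
Σ_{n≥1} δ_k |g_n|²/(n(δ_k² + ρ^{2n})) are bounded uniformly in k. -/
theorem stmt1 (ρ : ℝ) (hρ : 0 < ρ) (hρ1 : ρ < 1) (g : ℕ → ℝ)
    (hg_pow : ∀ n : ℕ, (∃ j : ℕ, 1 ≤ j ∧ n = 2 ^ j) → g n = n * ρ ^ ((n : ℝ) / 2))
    (hg_zero : ∀ n : ℕ, 1 ≤ n → (¬ ∃ j : ℕ, 1 ≤ j ∧ n = 2 ^ j) → g n = 0) :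
    ∃ C : ℝ, ∀ k : ℕ, 1 ≤ k →
      ∑' n : ℕ, ENNReal.ofReal
        (ρ ^ (2 ^ k + 2 ^ (k - 1)) * |g (n + 1)| ^ 2 /
          ((n + 1) * ((ρ ^ (2 ^ k + 2 ^ (k - 1))) ^ 2 + ρ ^ (2 * (n + 1)))))
        ≤ ENNReal.ofReal C := by
  set r : ℝ := ρ ^ ((1:ℝ)/4) with hr_def
  have hr0 : 0 < r := Real.rpow_pos_of_pos hρ _
  have hr1 : r < 1 := Real.rpow_lt_one hρ.le hρ1 (by norm_num)
  -- The majorant F n = (n+1) r^(n+1) is summable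
  have hsum0 : Summable (fun n : ℕ => (n : ℝ) ^ 1 * r ^ n) :=
    summable_pow_mul_geometric_of_norm_lt_one 1
      (by rwa [Real.norm_eq_abs, abs_of_pos hr0])
  have hsum : Summable (fun n : ℕ => ((n : ℝ) + 1) * r ^ (n + 1)) := by
    have h2 : Summable (fun n : ℕ => ((n + 1 : ℕ) : ℝ) ^ 1 * r ^ (n + 1)) :=
      (summable_nat_add_iff 1).2 hsum0
    refine h2.congr fun n => by push_cast; ring
  refine ⟨∑' n : ℕ, ((n : ℝ) + 1) * r ^ (n + 1), fun k hk => ?_⟩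
  have hbound : ∀ n : ℕ,
      ENNReal.ofReal
        (ρ ^ (2 ^ k + 2 ^ (k - 1)) * |g (n + 1)| ^ 2 /
          ((n + 1) * ((ρ ^ (2 ^ k + 2 ^ (k - 1))) ^ 2 + ρ ^ (2 * (n + 1)))))
        ≤ ENNReal.ofReal (((n : ℝ) + 1) * r ^ (n + 1)) := by
    intro n
    set N : ℕ := 2 ^ k + 2 ^ (k - 1) with hN
    set m : ℕ := n + 1 with hm
    by_cases hpow : ∃ j : ℕ, 1 ≤ j ∧ m = 2 ^ j
    · obtain ⟨j, hj, hmj⟩ := hpow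
      apply ENNReal.ofReal_le_ofReal
      have hg : g m = (m : ℝ) * ρ ^ ((m : ℝ) / 2) := hg_pow m ⟨j, hj, hmj⟩
      have hgsq : |g m| ^ 2 = (m : ℝ) ^ 2 * ρ ^ m := by
        rw [sq_abs, hg, mul_pow]
        congr 1
        rw [← Real.rpow_natCast (ρ ^ ((m : ℝ) / 2)) 2, ← Real.rpow_mul hρ.le,
          ← Real.rpow_natCast ρ m]
        norm_num
      have hsq : (ρ ^ N) ^ 2 = ρ ^ (2 * N) := by rw [← pow_mul]; ring_nf
      have hrm : r ^ m = ρ ^ ((m : ℝ) / 4) := by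
        rw [hr_def, ← Real.rpow_natCast (ρ ^ ((1:ℝ)/4)) m, ← Real.rpow_mul hρ.le]
        ring_nf
      have hkey := key_ineq ρ hρ hρ1.le N m (hmj ▸ nat_gap j k hj hk)
      have hden : (0:ℝ) < (m : ℝ) * (ρ ^ (2 * N) + ρ ^ (2 * m)) := by positivity
      have hmain : ρ ^ N * |g m| ^ 2 / ((m : ℝ) * ((ρ ^ N) ^ 2 + ρ ^ (2 * m)))
          ≤ (m : ℝ) * r ^ m := by
        rw [hgsq, hsq, div_le_iff₀ hden]
        have hmpos : (0:ℝ) < (m : ℝ) := by positivity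
        calc ρ ^ N * ((m : ℝ) ^ 2 * ρ ^ m) = (m : ℝ) ^ 2 * ρ ^ (N + m) := by
              rw [pow_add]; ring
          _ ≤ (m : ℝ) ^ 2 * (ρ ^ ((m : ℝ) / 4) * (ρ ^ (2 * N) + ρ ^ (2 * m))) := by
              apply mul_le_mul_of_nonneg_left hkey (by positivity)
          _ = (m : ℝ) * (ρ ^ ((m : ℝ) / 4)) * ((m : ℝ) * (ρ ^ (2 * N) + ρ ^ (2 * m))) := by
              ring
          _ = (m : ℝ) * r ^ m * ((m : ℝ) * (ρ ^ (2 * N) + ρ ^ (2 * m))) := by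
              rw [hrm]
        
      have hcast : ((m : ℝ)) = (n : ℝ) + 1 := by push_cast [hm]; ring
      calc ρ ^ N * |g (n + 1)| ^ 2 / (((n : ℝ) + 1) * ((ρ ^ N) ^ 2 + ρ ^ (2 * (n + 1))))
          = ρ ^ N * |g m| ^ 2 / ((m : ℝ) * ((ρ ^ N) ^ 2 + ρ ^ (2 * m))) := by
            rw [hcast]
        _ ≤ (m : ℝ) * r ^ m := hmain
        _ = ((n : ℝ) + 1) * r ^ (n + 1) := by rw [hcast]
    · have hg : g m = 0 := hg_zero m (by omega) hpow
      have : ρ ^ (2 ^ k + 2 ^ (k - 1)) * |g (n + 1)| ^ 2 /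
          (((n : ℝ) + 1) * ((ρ ^ (2 ^ k + 2 ^ (k - 1))) ^ 2 + ρ ^ (2 * (n + 1)))) = 0 := by
        rw [show n + 1 = m from rfl, hg]
        simp
      rw [this]
      simp only [ENNReal.ofReal_zero]
      exact zero_le
  calc ∑' n : ℕ, ENNReal.ofReal
        (ρ ^ (2 ^ k + 2 ^ (k - 1)) * |g (n + 1)| ^ 2 /
          ((n + 1) * ((ρ ^ (2 ^ k + 2 ^ (k - 1))) ^ 2 + ρ ^ (2 * (n + 1)))))
      ≤ ∑' n : ℕ, ENNReal.ofReal (((n : ℝ) + 1) * r ^ (n + 1)) :=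
        ENNReal.tsum_le_tsum hbound
    _ = ENNReal.ofReal (∑' n : ℕ, ((n : ℝ) + 1) * r ^ (n + 1)) :=
        (ENNReal.ofReal_tsum_of_nonneg (fun n => by positivity) hsum).symm
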